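/- Suppose the entries of a vector m can be partitioned into groups M_1,...,M_{|z|} with 1 ≤ |M_i| ≤ 2 and ∑_{x∈M_i} x = z_i for each i, where z is a probability vector. Then half(z) ⪯ m, i.e., half(z) is majorized by m. -/
import Mathlib

open Finset

/-- Majorization via prefix sums (vectors as functions ℕ → ℝ, padded with zeros). -/
def Maj (p q : ℕ → ℝ) : Prop :=
  ∀ i : ℕ, ∑ k ∈ Finset.range i, p k ≤ ∑ k ∈ Finset.range i, q k

/-- A probability vector of length `n`, sorted non-increasingly, zero beyond `n`. -/
def IsProbVec (n : ℕ) (p : ℕ → ℝ) : Prop :=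
  (∀ i, 0 ≤ p i) ∧ (∀ i j : ℕ, i ≤ j → p j ≤ p i) ∧
  (∑ k ∈ Finset.range n, p k = 1) ∧ (∀ i, n ≤ i → p i = 0)

/-- The greatest lower bound `p ∧ q` in the majorization lattice. -/
noncomputable def meet (p q : ℕ → ℝ) : ℕ → ℝ := fun i =>
  min (∑ k ∈ Finset.range (i + 1), p k) (∑ k ∈ Finset.range (i + 1), q k) -
  min (∑ k ∈ Finset.range i, p k) (∑ k ∈ Finset.range i, q k)

/-- Shannon entropy (base 2) of the first `n` components. -/
noncomputable def H2 (n : ℕ) (p : ℕ → ℝ) : ℝ :=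
  ∑ k ∈ Finset.range n, -(p k * Real.logb 2 (p k))

/-- Shannon entropy (base 2) of the entries of an `n × m` matrix. -/
noncomputable def Hmat (n m : ℕ) (M : ℕ → ℕ → ℝ) : ℝ :=
  ∑ i ∈ Finset.range n, ∑ j ∈ Finset.range m, -(M i j * Real.logb 2 (M i j))

/-- `M` is a coupling of `p` and `q`: nonnegative, row sums `p`, column sums `q`. -/
def IsCoupling (n m : ℕ) (p q : ℕ → ℝ) (M : ℕ → ℕ → ℝ) : Prop :=
  (∀ i j, 0 ≤ M i j) ∧ (∀ i < n, ∑ j ∈ Finset.range m, M i j = p i) ∧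
  (∀ j < m, ∑ i ∈ Finset.range n, M i j = q j)

/-- The `half` operator: duplicates and halves each component. -/
noncomputable def half (p : ℕ → ℝ) : ℕ → ℝ := fun i => p (i / 2) / 2

/-- Iterated `half` operator. -/
noncomputable def halfIter : ℕ → (ℕ → ℝ) → (ℕ → ℝ)
  | 0, p => p
  | (i + 1), p => half (halfIter i p)

/-- Iterated majorization meet of `p 0, p 1, …, p k`. -/
noncomputable def bigMeet (p : ℕ → ℕ → ℝ) : ℕ → (ℕ → ℝ)
  | 0 => p 0
  | (k + 1) => meet (bigMeet p k) (p (k + 1))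

lemma halfPrefix (z : ℕ → ℝ) (i : ℕ) :
    ∑ k ∈ Finset.range i, half z k =
      (∑ j ∈ Finset.range (i/2), z j) + (if i % 2 = 1 then z (i/2) / 2 else 0) := by
  induction i with
  | zero => simp
  | succ i ih =>
    rw [Finset.sum_range_succ, ih]
    unfold half
    rcases Nat.even_or_odd i with he | ho
    · have h1 : i % 2 = 0 := by obtain ⟨t, ht⟩ := he; omega
      have h2 : (i+1) % 2 = 1 := by omega
      have h3 : (i+1)/2 = i/2 := by omega
      simp [h1, h2, h3]
    · have h1 : i % 2 = 1 := by obtain ⟨t, ht⟩ := ho; omega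
      have h2 : (i+1) % 2 = 0 := by omega
      have h3 : (i+1)/2 = i/2 + 1 := by omega
      rw [h3, Finset.sum_range_succ]
      have h4 : i / 2 = (i+1)/2 - 1 := by omega
      simp [h1, h2]
      ring

lemma sum_le_prefix (m : ℕ → ℝ) (hsorted : ∀ i j : ℕ, i ≤ j → m j ≤ m i) :
    ∀ (c : ℕ) (T : Finset ℕ), T.card = c → ∑ k ∈ T, m k ≤ ∑ k ∈ Finset.range c, m k := by
  intro c
  induction c with
  | zero => intro T hT; simp [Finset.card_eq_zero.mp hT]
  | succ c ih =>
    intro T hT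
    have hne : T.Nonempty := Finset.card_pos.mp (by omega)
    set a := T.max' hne with ha
    have hmem : a ∈ T := T.max'_mem hne
    have hsub : T ⊆ Finset.range (a+1) := by
      intro x hx
      exact Finset.mem_range.mpr (Nat.lt_succ_of_le (T.le_max' x hx))
    have hca : c + 1 ≤ a + 1 := by
      have := Finset.card_le_card hsub
      simpa [hT] using this
    have h1 : (T.erase a).card = c := by rw [Finset.card_erase_of_mem hmem, hT]; omega
    have h2 := ih (T.erase a) h1
    have h3 : ∑ k ∈ T, m k = ∑ k ∈ T.erase a, m k + m a := by
      rw [← Finset.sum_erase_add T m hmem]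
    rw [h3, Finset.sum_range_succ]
    exact add_le_add h2 (hsorted c a (by omega))

theorem stmt15 (n N : ℕ) (z : ℕ → ℝ) (hz : IsProbVec n z)
    (m : ℕ → ℝ) (hmnn : ∀ i, 0 ≤ m i) (hm0 : ∀ i, N ≤ i → m i = 0)
    (hsorted : ∀ i j : ℕ, i ≤ j → m j ≤ m i)
    (g : ℕ → ℕ) (hg : ∀ i < N, g i < n)
    (hfib : ∀ j < n, 1 ≤ ((Finset.range N).filter (fun i => g i = j)).card ∧
      ((Finset.range N).filter (fun i => g i = j)).card ≤ 2)
    (hsum : ∀ j < n, ∑ i ∈ (Finset.range N).filter (fun i => g i = j), m i = z j) :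
    Maj (half z) m := by
  obtain ⟨hz1, hz2, hz3, hz4⟩ := hz
  intro i
  rw [halfPrefix]
  set t := i / 2 with htdef
  -- N ≤ 2n
  have hmaps : ∀ x ∈ Finset.range N, g x ∈ Finset.range n := fun x hx =>
    Finset.mem_range.mpr (hg x (Finset.mem_range.mp hx))
  have hNcard : N = ∑ j ∈ Finset.range n, ((Finset.range N).filter (fun i => g i = j)).card := by
    have := Finset.card_eq_sum_card_fiberwise hmaps
    simpa using this
  have hN2n : N ≤ 2 * n := by
    have h1 : ∑ j ∈ Finset.range n, ((Finset.range N).filter (fun i => g i = j)).card ≤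
        ∑ j ∈ Finset.range n, 2 :=
      Finset.sum_le_sum fun j hj => (hfib j (Finset.mem_range.mp hj)).2
    simp only [Finset.sum_const, Finset.card_range, smul_eq_mul] at h1
    omega
  by_cases hcase : n ≤ t
  · -- large i : LHS ≤ 1 = full sum of m ≤ prefix
    have hLHS : (∑ j ∈ Finset.range t, z j) + (if i % 2 = 1 then z t / 2 else 0) = 1 := by
      have h1 : ∑ j ∈ Finset.range t, z j = ∑ j ∈ Finset.range n, z j := by
        symm
        apply Finset.sum_subset (Finset.range_subset_range.mpr hcase)
        intro x _ hx
        exact hz4 x (le_of_not_gt (fun h => hx (Finset.mem_range.mpr h)))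
      have h2 : z t = 0 := hz4 t hcase
      rw [h1, hz3, h2]
      simp
    rw [hLHS]
    have hsubN : Finset.range N ⊆ Finset.range i := by
      apply Finset.range_subset_range.mpr
      omega
    have hfull : ∑ k ∈ Finset.range N, m k = 1 := by
      rw [← Finset.sum_fiberwise_of_maps_to hmaps m]
      rw [← hz3]
      exact Finset.sum_congr rfl fun j hj => hsum j (Finset.mem_range.mp hj)
    calc (1:ℝ) = ∑ k ∈ Finset.range N, m k := hfull.symm
      _ ≤ ∑ k ∈ Finset.range i, m k :=
        Finset.sum_le_sum_of_subset_of_nonneg hsubN fun k _ _ => hmnn k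
  · push_neg at hcase
    set T := (Finset.range N).filter (fun k => g k < t) with hTdef
    have hTmaps : ∀ x ∈ T, g x ∈ Finset.range t := by
      intro x hx
      exact Finset.mem_range.mpr (Finset.mem_filter.mp hx).2
    have hTfiber : ∀ j < t, T.filter (fun k => g k = j) =
        (Finset.range N).filter (fun k => g k = j) := by
      intro j hj
      ext x
      constructor
      · intro hx
        obtain ⟨hx1, hx2⟩ := Finset.mem_filter.mp hx
        exact Finset.mem_filter.mpr ⟨(Finset.mem_filter.mp hx1).1, hx2⟩
      · intro hx
        obtain ⟨hx1, hx2⟩ := Finset.mem_filter.mp hx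
        exact Finset.mem_filter.mpr ⟨Finset.mem_filter.mpr ⟨hx1, by omega⟩, hx2⟩
    have hTcard : T.card ≤ 2 * t := by
      have h1 := Finset.card_eq_sum_card_fiberwise hTmaps
      have h2 : ∑ j ∈ Finset.range t, (T.filter (fun k => g k = j)).card ≤
          ∑ j ∈ Finset.range t, 2 := by
        apply Finset.sum_le_sum
        intro j hj
        have hjt := Finset.mem_range.mp hj
        rw [hTfiber j hjt]
        exact (hfib j (by omega)).2
      simp only [Finset.sum_const, Finset.card_range, smul_eq_mul] at h2
      omega
    have hTsum : ∑ k ∈ T, m k = ∑ j ∈ Finset.range t, z j := by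
      rw [← Finset.sum_fiberwise_of_maps_to hTmaps m]
      apply Finset.sum_congr rfl
      intro j hj
      have hjt := Finset.mem_range.mp hj
      rw [hTfiber j hjt]
      exact hsum j (by omega)
    rcases Nat.even_or_odd i with he | ho
    · -- i even : i = 2t
      have h1 : i % 2 = 0 := by obtain ⟨s, hs⟩ := he; omega
      simp only [h1]
      norm_num
      rw [← hTsum]
      calc ∑ k ∈ T, m k ≤ ∑ k ∈ Finset.range T.card, m k :=
            sum_le_prefix m hsorted T.card T rfl
        _ ≤ ∑ k ∈ Finset.range i, m k :=
            Finset.sum_le_sum_of_subset_of_nonneg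
              (Finset.range_subset_range.mpr (by omega)) fun k _ _ => hmnn k
    · -- i odd : i = 2t + 1
      have h1 : i % 2 = 1 := by obtain ⟨s, hs⟩ := ho; omega
      simp only [h1, if_pos]
      set F := (Finset.range N).filter (fun k => g k = t) with hFdef
      have hFcard1 : 1 ≤ F.card := by rw [hFdef]; exact (hfib t hcase).1
      have hFcard2 : F.card ≤ 2 := by rw [hFdef]; exact (hfib t hcase).2
      have hFsum : ∑ k ∈ F, m k = z t := by rw [hFdef]; exact hsum t hcase
      have hFne : F.Nonempty := Finset.card_pos.mp (by omega)
      set e := F.min' hFne with hedef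
      have heF : e ∈ F := F.min'_mem hFne
      have hge : g e = t := (Finset.mem_filter.mp heF).2
      have heN : e ∈ Finset.range N := (Finset.mem_filter.mp heF).1
      have hme : z t ≤ 2 * m e := by
        have h2 : ∑ k ∈ F, m k ≤ F.card • m e := by
          apply Finset.sum_le_card_nsmul
          intro x hx
          exact hsorted e x (F.min'_le x hx)
        rw [hFsum] at h2
        have h4 : (F.card : ℝ) * m e ≤ 2 * m e := by
          apply mul_le_mul_of_nonneg_right _ (hmnn e)
          exact_mod_cast hFcard2
        calc z t ≤ F.card • m e := h2
          _ = (F.card : ℝ) * m e := by simp [nsmul_eq_mul]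
          _ ≤ 2 * m e := h4
      have heT : e ∉ T := by
        intro h
        have := (Finset.mem_filter.mp h).2
        omega
      have hins : ∑ k ∈ insert e T, m k = m e + ∑ k ∈ T, m k := Finset.sum_insert heT
      have hinscard : (insert e T).card = T.card + 1 := Finset.card_insert_of_notMem heT
      calc (∑ j ∈ Finset.range t, z j) + z t / 2
          ≤ (∑ k ∈ T, m k) + m e := by
            apply add_le_add (le_of_eq hTsum.symm)
            linarith
        _ = ∑ k ∈ insert e T, m k := by rw [hins]; ring
        _ ≤ ∑ k ∈ Finset.range ((insert e T).card), m k :=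
            sum_le_prefix m hsorted _ _ rfl
        _ ≤ ∑ k ∈ Finset.range i, m k :=
            Finset.sum_le_sum_of_subset_of_nonneg
              (Finset.range_subset_range.mpr (by omega)) fun k _ _ => hmnn k
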